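/- With notation as in the Kähler cone setting, for ρ = K r^{−2n+2}(log r)^δ with δ > 0 and K < 0, one has (ω + dd^c ρ)^n = (1 − δ(n−1) K r^{−2n}(log r)^{δ−1} + o(r^{−2n}(log r)^{δ−1})) ω^n as r → ∞; in particular (ω + dd^c ρ)^n ≥ ω^n for r sufficiently large. -/

import Mathlib

open Filter Real Finset Topology

lemma mono_hasDerivAt (c b : ℝ) {x : ℝ} (hx : 1 < x) :
    HasDerivAt (fun y : ℝ => y ^ c * Real.log y ^ b)
      (c * (x ^ (c-1) * Real.log x ^ b) + b * (x ^ (c-1) * Real.log x ^ (b-1))) x := by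
  have hx0 : 0 < x := lt_trans one_pos hx
  have hlog : Real.log x ≠ 0 := ne_of_gt (Real.log_pos hx)
  have h1 : HasDerivAt (fun y : ℝ => y ^ c) (c * x ^ (c-1)) x :=
    Real.hasDerivAt_rpow_const (Or.inl hx0.ne')
  have h2 : HasDerivAt (fun y : ℝ => Real.log y ^ b) (x⁻¹ * b * Real.log x ^ (b-1)) x :=
    (Real.hasDerivAt_log hx0.ne').rpow_const (Or.inl hlog)
  have h3 := h1.fun_mul h2
  refine h3.congr_deriv ?_
  rw [Real.rpow_sub_one hx0.ne']
  field_simp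

lemma tendsto_w (c b : ℝ) (hc : 0 < c) :
    Tendsto (fun x : ℝ => x ^ (-c) * Real.log x ^ b) atTop (𝓝 0) := by
  have h := (tendsto_rpow_mul_exp_neg_mul_atTop_nhds_zero b c hc).comp Real.tendsto_log_atTop
  apply h.congr'
  filter_upwards [eventually_gt_atTop 0] with x hx
  simp only [Function.comp_apply]
  rw [Real.rpow_def_of_pos hx, mul_comm (Real.log x)]
  ring

/- STATEMENT 3: For ρ = K r^{−2n+2}(log r)^δ with K < 0, δ > 0 on a Kähler cone of
   complex dimension n, writing (ω + dd^c ρ)^n = A(r)·B(r)^{n−1}·ω^n with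
   A(r) = 1 + (ρ''r + ρ')/(2r) (coefficient on r dr∧η) and B(r) = 1 + ρ'/r
   (coefficient on ½r²dη), one has
   (ω + dd^c ρ)^n = (1 − δ(n−1)K r^{−2n}(log r)^{δ−1} + o(r^{−2n}(log r)^{δ−1})) ω^n
   as r → ∞; in particular (ω + dd^c ρ)^n ≥ ω^n for r sufficiently large. -/
theorem stmt3 (n : ℕ) (hn : 2 ≤ n) (K δ : ℝ) (hK : K < 0) (hδ : 0 < δ)
    (ρ A B : ℝ → ℝ)
    (hρ : ∀ r : ℝ, 0 < r → ρ r = K * r ^ ((2 : ℝ) - 2 * n) * Real.log r ^ δ)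
    (hA : ∀ r : ℝ, 0 < r → A r = 1 + (deriv (deriv ρ) r * r + deriv ρ r) / (2 * r))
    (hB : ∀ r : ℝ, 0 < r → B r = 1 + deriv ρ r / r) :
    (fun r : ℝ => A r * B r ^ (n - 1)
        - (1 - δ * ((n : ℝ) - 1) * K * r ^ (-(2 : ℝ) * n) * Real.log r ^ (δ - 1)))
      =o[atTop] (fun r : ℝ => r ^ (-(2 : ℝ) * n) * Real.log r ^ (δ - 1)) ∧
    ∀ᶠ r : ℝ in atTop, 1 ≤ A r * B r ^ (n - 1) := by

  set a : ℝ := (2 : ℝ) - 2 * n with ha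
  set m : ℕ := n - 1 with hmdef
  have hm : (m : ℝ) = (n : ℝ) - 1 := by
    rw [hmdef, Nat.cast_sub (by omega)]; norm_num
  have he1 : (1:ℝ) < Real.exp 1 := by
    have h9 := Real.exp_one_gt_d9; norm_num at h9; linarith
  set u : ℝ → ℝ := fun r : ℝ => r ^ (-(2 : ℝ) * n) * Real.log r ^ (δ - 1) with hu
  set p : ℝ → ℝ := fun r : ℝ =>
    K * (a^2/2 * Real.log r + a*δ + δ*(δ-1)/2 * (Real.log r)⁻¹) with hp
  set q : ℝ → ℝ := fun r : ℝ => K * (a * Real.log r + δ) with hq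
  set S : ℝ → ℝ := fun r : ℝ => ∑ i ∈ Finset.range m, (1 + u r * q r)^i with hS
  set T : ℝ → ℝ := fun r : ℝ =>
    ∑ i ∈ Finset.range m, ∑ j ∈ Finset.range i, (1 + u r * q r)^j with hT
  set F : ℝ → ℝ := fun r : ℝ => (u r * p r * q r) * S r + (u r * q r^2) * T r
    + (K*δ*(δ-1)/2) * (Real.log r)⁻¹ with hF
  clear_value a m u p q S T F
  -- first derivative
  have hd1 : ∀ r : ℝ, 1 < r → deriv ρ r =
      K * (a * (r ^ (a-1) * Real.log r ^ δ) + δ * (r ^ (a-1) * Real.log r ^ (δ-1))) := by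
    intro r hr
    have hr0 : 0 < r := lt_trans one_pos hr
    have heq : ρ =ᶠ[𝓝 r] fun x => K * (x ^ a * Real.log x ^ δ) := by
      filter_upwards [eventually_gt_nhds hr0] with x hx
      rw [hρ x hx]; ring
    rw [heq.deriv_eq]
    exact ((mono_hasDerivAt a δ hr).const_mul K).deriv
  -- second derivative
  have hd2 : ∀ r : ℝ, 1 < r → deriv (deriv ρ) r =
      K*a * ((a-1) * (r ^ (a-2) * Real.log r ^ δ) + δ * (r ^ (a-2) * Real.log r ^ (δ-1)))
      + K*δ * ((a-1) * (r ^ (a-2) * Real.log r ^ (δ-1)) + (δ-1) * (r ^ (a-2) * Real.log r ^ (δ-2))) := by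
    intro r hr
    have heq : deriv ρ =ᶠ[𝓝 r] fun x =>
        K*a * (x ^ (a-1) * Real.log x ^ δ) + K*δ * (x ^ (a-1) * Real.log x ^ (δ-1)) := by
      filter_upwards [eventually_gt_nhds hr] with x hx
      rw [hd1 x hx]; ring
    rw [heq.deriv_eq]
    have h := (((mono_hasDerivAt (a-1) δ hr).const_mul (K*a)).fun_add
      ((mono_hasDerivAt (a-1) (δ-1) hr).const_mul (K*δ))).deriv
    rw [h, show a-1-1 = a-2 by ring, show δ-1-1 = δ-2 by ring]
  have hupos : ∀ r : ℝ, 1 < r → 0 < u r := by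
    intro r hr
    have hr0 : 0 < r := lt_trans one_pos hr
    simp only [hu]
    exact mul_pos (Real.rpow_pos_of_pos hr0 _) (Real.rpow_pos_of_pos (Real.log_pos hr) _)
  -- A and B formulas
  have hAeq : ∀ r : ℝ, Real.exp 1 < r → A r = 1 + u r * p r := by
    intro r hr
    have hr1 : 1 < r := lt_trans he1 hr
    have hr0 : 0 < r := lt_trans one_pos hr1
    have hL : 0 < Real.log r := Real.log_pos hr1
    rw [hA r hr0, hd1 r hr1, hd2 r hr1]
    have e3 : r ^ (a-1) = r ^ (a-2) * r := by
      have h := Real.rpow_add_one hr0.ne' (a-2)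
      rw [show a-2+1 = a-1 by ring] at h; exact h
    have e1 : Real.log r ^ δ = Real.log r ^ (δ-1) * Real.log r := by
      have h := Real.rpow_add_one hL.ne' (δ-1)
      rw [show δ-1+1 = δ by ring] at h; exact h
    have e2 : Real.log r ^ (δ-2) = Real.log r ^ (δ-1) * (Real.log r)⁻¹ := by
      rw [show δ-2 = (δ-1)-1 by ring, Real.rpow_sub_one hL.ne', div_eq_mul_inv]
    have e4 : r ^ (a-2) = r ^ (-(2:ℝ)*n) := by
      rw [show a - 2 = -(2:ℝ)*n by rw [ha]; ring]
    simp only [hu, hp]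
    rw [e3, e1, e2, e4]
    field_simp
    ring
  have hBeq : ∀ r : ℝ, Real.exp 1 < r → B r = 1 + u r * q r := by
    intro r hr
    have hr1 : 1 < r := lt_trans he1 hr
    have hr0 : 0 < r := lt_trans one_pos hr1
    have hL : 0 < Real.log r := Real.log_pos hr1
    rw [hB r hr0, hd1 r hr1]
    have e3 : r ^ (a-1) = r ^ (a-2) * r := by
      have h := Real.rpow_add_one hr0.ne' (a-2)
      rw [show a-2+1 = a-1 by ring] at h; exact h
    have e1 : Real.log r ^ δ = Real.log r ^ (δ-1) * Real.log r := by
      have h := Real.rpow_add_one hL.ne' (δ-1)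
      rw [show δ-1+1 = δ by ring] at h; exact h
    have e4 : r ^ (a-2) = r ^ (-(2:ℝ)*n) := by
      rw [show a - 2 = -(2:ℝ)*n by rw [ha]; ring]
    simp only [hu, hq]
    rw [e3, e1, e4]
    field_simp
  -- key identity
  have hkey : ∀ r : ℝ, Real.exp 1 < r →
      A r * B r ^ m - (1 - δ * ((n : ℝ) - 1) * K * r ^ (-(2 : ℝ) * n) * Real.log r ^ (δ - 1))
        = u r * F r := by
    intro r hr
    have hr1 : 1 < r := lt_trans he1 hr
    have hgeom : (1 + u r * q r) ^ m = 1 + (u r * q r) * S r := by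
      have h := geom_sum_mul (1 + u r * q r) m
      simp only [hS]
      linear_combination -h
    have hsum : S r = (m:ℝ) + (u r * q r) * T r := by
      simp only [hS, hT]
      rw [Finset.mul_sum]
      have h : ∀ i ∈ Finset.range m, ((1:ℝ) + u r * q r)^i
          = 1 + (u r * q r) * ∑ j ∈ Finset.range i, (1 + u r * q r)^j := by
        intro i _
        linear_combination -geom_sum_mul (1 + u r * q r) i
      rw [Finset.sum_congr rfl h, Finset.sum_add_distrib, Finset.sum_const, Finset.card_range,
        nsmul_eq_mul, mul_one]
    have hpq : p r + ((n:ℝ)-1) * q r + δ * ((n:ℝ)-1) * K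
        = K*δ*(δ-1)/2 * (Real.log r)⁻¹ := by
      simp only [hp, hq]
      rw [ha]; ring
    rw [hAeq r hr, hBeq r hr]
    simp only [hF]
    rw [hgeom, hsum, hm]
    simp only [hp, hq, hu] at hpq ⊢
    linear_combination (r ^ (-(2:ℝ)*n) * Real.log r ^ (δ-1)) * hpq
  -- limits
  have hinv : Tendsto (fun r : ℝ => (Real.log r)⁻¹) atTop (𝓝 0) :=
    Real.tendsto_log_atTop.inv_tendsto_atTop
  have hw : ∀ b : ℝ, Tendsto (fun r : ℝ => r ^ (-(2:ℝ)*n) * Real.log r ^ b) atTop (𝓝 0) := by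
    intro b
    have hn0 : (0:ℝ) < 2*n := by
      have : (0:ℝ) < (n:ℝ) := by exact_mod_cast (by omega : 0 < n)
      linarith
    have h := tendsto_w (2*(n:ℝ)) b hn0
    simpa [neg_mul] using h
  have hqL : Tendsto (fun r : ℝ => q r * (Real.log r)⁻¹) atTop (𝓝 (K*a)) := by
    have h : Tendsto (fun r : ℝ => K*a + K*δ*(Real.log r)⁻¹) atTop (𝓝 (K*a + K*δ*0)) :=
      tendsto_const_nhds.add (hinv.const_mul (K*δ))
    rw [mul_zero, add_zero] at h
    apply h.congr'
    filter_upwards [eventually_gt_atTop (Real.exp 1)] with r hr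
    have hL : Real.log r ≠ 0 := (Real.log_pos (lt_trans he1 hr)).ne'
    simp only [hq]
    field_simp
  have hpL : Tendsto (fun r : ℝ => p r * (Real.log r)⁻¹) atTop (𝓝 (K*(a^2/2))) := by
    have h : Tendsto (fun r : ℝ => K*(a^2/2) + K*(a*δ)*(Real.log r)⁻¹
        + K*(δ*(δ-1)/2)*((Real.log r)⁻¹*(Real.log r)⁻¹)) atTop
        (𝓝 (K*(a^2/2) + K*(a*δ)*0 + K*(δ*(δ-1)/2)*(0*0))) :=
      (tendsto_const_nhds.add (hinv.const_mul (K*(a*δ)))).add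
        ((hinv.mul hinv).const_mul (K*(δ*(δ-1)/2)))
    norm_num at h
    apply h.congr'
    filter_upwards [eventually_gt_atTop (Real.exp 1)] with r hr
    have hL : Real.log r ≠ 0 := (Real.log_pos (lt_trans he1 hr)).ne'
    simp only [hp]
    field_simp
  have hUL : Tendsto (fun r : ℝ => u r * Real.log r) atTop (𝓝 0) := by
    apply (hw δ).congr'
    filter_upwards [eventually_gt_atTop (Real.exp 1)] with r hr
    have hL : 0 < Real.log r := Real.log_pos (lt_trans he1 hr)
    simp only [hu]
    rw [show Real.log r ^ δ = Real.log r ^ (δ-1) * Real.log r from by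
      have h := Real.rpow_add_one hL.ne' (δ-1)
      rw [show δ-1+1 = δ by ring] at h; exact h]
    ring
  have hULL : Tendsto (fun r : ℝ => u r * Real.log r * Real.log r) atTop (𝓝 0) := by
    apply (hw (δ+1)).congr'
    filter_upwards [eventually_gt_atTop (Real.exp 1)] with r hr
    have hL : 0 < Real.log r := Real.log_pos (lt_trans he1 hr)
    simp only [hu]
    rw [show Real.log r ^ (δ+1) = Real.log r ^ (δ-1) * Real.log r * Real.log r from by
      have h := Real.rpow_add_one hL.ne' (δ-1+1)
      have h2 := Real.rpow_add_one hL.ne' (δ-1)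
      rw [h2] at h
      rw [show δ-1+1+1 = δ+1 by ring] at h; exact h]
    ring
  have hUQ : Tendsto (fun r : ℝ => u r * q r) atTop (𝓝 0) := by
    have h := hUL.mul hqL
    rw [zero_mul] at h
    apply h.congr'
    filter_upwards [eventually_gt_atTop (Real.exp 1)] with r hr
    have hL : Real.log r ≠ 0 := (Real.log_pos (lt_trans he1 hr)).ne'
    field_simp
  have hUPQ : Tendsto (fun r : ℝ => u r * p r * q r) atTop (𝓝 0) := by
    have h := (hULL.mul hpL).mul hqL
    rw [zero_mul, zero_mul] at h
    apply h.congr'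
    filter_upwards [eventually_gt_atTop (Real.exp 1)] with r hr
    have hL : Real.log r ≠ 0 := (Real.log_pos (lt_trans he1 hr)).ne'
    field_simp
  have hUQQ : Tendsto (fun r : ℝ => u r * q r ^ 2) atTop (𝓝 0) := by
    have h := (hULL.mul hqL).mul hqL
    rw [zero_mul, zero_mul] at h
    apply h.congr'
    filter_upwards [eventually_gt_atTop (Real.exp 1)] with r hr
    have hL : Real.log r ≠ 0 := (Real.log_pos (lt_trans he1 hr)).ne'
    field_simp
  have hSlim : Tendsto S atTop (𝓝 (m:ℝ)) := by
    have hc : Continuous (fun t : ℝ => ∑ i ∈ Finset.range m, (1+t)^i) :=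
      continuous_finset_sum _ fun i _ => (continuous_const.add continuous_id).pow i
    have h := (hc.tendsto 0).comp hUQ
    simp only [Function.comp_def] at h
    have hv : (∑ i ∈ Finset.range m, ((1:ℝ)+0)^i) = (m:ℝ) := by simp
    rw [hv] at h
    rw [hS]; exact h
  have hTlim : Tendsto T atTop (𝓝 (∑ i ∈ Finset.range m, (i:ℝ))) := by
    have hc : Continuous (fun t : ℝ => ∑ i ∈ Finset.range m, ∑ j ∈ Finset.range i, (1+t)^j) := by
      apply continuous_finset_sum
      intro i _
      apply continuous_finset_sum
      intro j _
      exact (continuous_const.add continuous_id).pow j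
    have h := (hc.tendsto 0).comp hUQ
    simp only [Function.comp_def] at h
    have hv : (∑ i ∈ Finset.range m, ∑ j ∈ Finset.range i, ((1:ℝ)+0)^j)
        = ∑ i ∈ Finset.range m, (i:ℝ) := by simp
    rw [hv] at h
    rw [hT]; exact h
  have hFlim : Tendsto F atTop (𝓝 0) := by
    have h := ((hUPQ.mul hSlim).add (hUQQ.mul hTlim)).add (hinv.const_mul (K*δ*(δ-1)/2))
    have hv : ((0:ℝ) * (m:ℝ) + 0 * ∑ i ∈ Finset.range m, (i:ℝ)) + (K*δ*(δ-1)/2) * 0 = 0 := by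
      ring
    rw [hv] at h
    rw [hF]; exact h
  have hne : ∀ᶠ r : ℝ in atTop, u r ≠ 0 := by
    filter_upwards [eventually_gt_atTop 1] with r hr
    exact (hupos r hr).ne'
  have ho : (fun r : ℝ => A r * B r ^ m
        - (1 - δ * ((n : ℝ) - 1) * K * r ^ (-(2 : ℝ) * n) * Real.log r ^ (δ - 1)))
      =o[atTop] u := by
    rw [Asymptotics.isLittleO_iff_tendsto' (by
      filter_upwards [hne] with r hr h0; exact absurd h0 hr)]
    apply hFlim.congr'
    filter_upwards [eventually_gt_atTop (Real.exp 1)] with r hr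
    have hr1 : 1 < r := lt_trans he1 hr
    rw [hkey r hr, mul_div_cancel_left₀ _ (hupos r hr1).ne']
  refine ⟨ho, ?_⟩
  have hc : (0:ℝ) < δ * ((n:ℝ)-1) * (-K) / 2 := by
    have hn1 : (1:ℝ) ≤ (n:ℝ) - 1 := by
      have : (2:ℝ) ≤ (n:ℝ) := by exact_mod_cast hn
      linarith
    have : (0:ℝ) < -K := by linarith
    positivity
  filter_upwards [ho.def hc, eventually_gt_atTop (Real.exp 1)] with r hb hr
  have hr1 : 1 < r := lt_trans he1 hr
  have hU : 0 < u r := hupos r hr1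
  rw [Real.norm_eq_abs, Real.norm_eq_abs, abs_of_pos hU] at hb
  have hWu : δ * ((n:ℝ)-1) * K * r ^ (-(2:ℝ)*n) * Real.log r ^ (δ-1)
      = δ * ((n:ℝ)-1) * K * u r := by simp only [hu]; ring
  rw [hWu] at hb
  have h2 := (abs_le.mp hb).1
  have h3 : -(δ * ((n:ℝ)-1) * K * u r) = 2 * (δ * ((n:ℝ)-1) * (-K) / 2 * u r) := by ring
  nlinarith [mul_nonneg hc.le hU.le]
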